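/- Let X be a topological space that is the union of finitely many compact connected linearly ordered subspaces. Let U be an orderly open neighborhood of a point p in X, and let D be a dense subset of X. Then there exists an orderly open neighborhood V of p with closure(V) contained in U and closure(V) \ V contained in D. -/

import Mathlib

open Set Topology

universe u

/-- A topological space is a LOTS if it is homeomorphic to a linear order with the order topology. -/
def IsLOTS (Y : Type u) [TopologicalSpace Y] : Prop :=
  ∃ (L : Type u) (lo : LinearOrder L) (ts : TopologicalSpace L),
    @OrderTopology L ts lo.toPartialOrder.toPreorder ∧ Nonempty (Y ≃ₜ L)

/-- The set of locally ordered points of `X`. -/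
def LO (X : Type u) [TopologicalSpace X] : Set X :=
  {x | ∃ U : Set X, IsOpen U ∧ x ∈ U ∧ IsLOTS ↥U}

/-- Orderly open sets. -/
def Orderly {X : Type u} [TopologicalSpace X] (U : Set X) : Prop :=
  IsOpen U ∧ U = interior (closure U) ∧ IsConnected U ∧
    (closure U \ U).Finite ∧ closure U \ U ⊆ LO X

/-- Topology of pointwise convergence on the homeomorphism group. -/
instance homPt (X : Type u) [TopologicalSpace X] : TopologicalSpace (X ≃ₜ X) :=
  TopologicalSpace.induced (fun f => (f : X → X)) Pi.topologicalSpace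

section OrderAux


variable {α : Type*} [LinearOrder α] [TopologicalSpace α] [OrderTopology α]

lemma auxA1 [CompactSpace α] {a b : α} {s : Set α}
    (hs : IsClosed (s ∩ Icc a b)) (ha : a ∈ s) (hab : a ≤ b)
    (hgt : ∀ x ∈ s ∩ Ico a b, (s ∩ Ioc x b).Nonempty) : b ∈ s := by
  obtain ⟨c, hc⟩ := hs.isCompact.exists_isGreatest ⟨a, ha, left_mem_Icc.2 hab⟩
  have hcb : c ≤ b := hc.1.2.2
  rcases eq_or_lt_of_le hcb with h | hlt
  · exact h ▸ hc.1.1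
  · obtain ⟨x, hxs, hcx, hxb⟩ := hgt c ⟨hc.1.1, hc.1.2.1, hlt⟩
    exact absurd (hc.2 ⟨hxs, le_trans hc.1.2.1 hcx.le, hxb⟩) (not_le.2 hcx)

lemma auxA2 [CompactSpace α] {a b : α} {s : Set α} (hs : IsClosed (s ∩ Icc a b))
    (ha : a ∈ s) (hgt : ∀ x ∈ s ∩ Ico a b, ∀ y ∈ Ioi x, (s ∩ Ioc x y).Nonempty) :
    Icc a b ⊆ s := by
  intro y hy
  have hcl : IsClosed (s ∩ Icc a y) := by
    suffices h : s ∩ Icc a y = s ∩ Icc a b ∩ Icc a y by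
      rw [h]; exact hs.inter isClosed_Icc
    rw [inter_assoc]
    congr
    exact (inter_eq_self_of_subset_right <| Icc_subset_Icc_right hy.2).symm
  exact auxA1 hcl ha hy.1 fun x hx =>
    (hgt x ⟨hx.1, Ico_subset_Ico_right hy.2 hx.2⟩ y hx.2.2).imp
      fun z hz => ⟨hz.1, hz.2.1, hz.2.2⟩

lemma auxA3 [CompactSpace α] [DenselyOrdered α] {a b : α} {s : Set α}
    (hs : IsClosed (s ∩ Icc a b)) (ha : a ∈ s)
    (hgt : ∀ x ∈ s ∩ Ico a b, s ∈ 𝓝[>] x) : Icc a b ⊆ s := by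
  apply auxA2 hs ha
  rintro x ⟨hxs, hxab⟩ y hyxb
  have h : s ∩ Ioc x y ∈ 𝓝[>] x :=
    Filter.inter_mem (hgt x ⟨hxs, hxab⟩) (Ioc_mem_nhdsGT_of_mem ⟨le_rfl, hyxb⟩)
  exact (nhdsGT_neBot_of_exists_gt ⟨b, hxab.2⟩).nonempty_of_mem h

lemma auxA4 [CompactSpace α] [DenselyOrdered α] {a b : α} (x y : α) (s t : Set α) (hxy : x ≤ y)
    (hs : IsClosed s) (ht : IsClosed t) (hab : Icc a b ⊆ s ∪ t)
    (hx : x ∈ Icc a b ∩ s) (hy : y ∈ Icc a b ∩ t) :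
    (Icc a b ∩ (s ∩ t)).Nonempty := by
  have xyab : Icc x y ⊆ Icc a b := Icc_subset_Icc hx.1.1 hy.1.2
  by_contra hst
  suffices h : Icc x y ⊆ s from
    hst ⟨y, xyab <| right_mem_Icc.2 hxy, h <| right_mem_Icc.2 hxy, hy.2⟩
  apply auxA3 (hs.inter isClosed_Icc) hx.2
  rintro z ⟨zs, hz⟩
  have zt : z ∈ tᶜ := fun zt => hst ⟨z, xyab <| Ico_subset_Icc_self hz, zs, zt⟩
  have h : tᶜ ∩ Ioc z y ∈ 𝓝[>] z := by
    rw [← nhdsWithin_Ioc_eq_nhdsGT hz.2]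
    exact mem_nhdsWithin.2 ⟨tᶜ, ht.isOpen_compl, zt, Subset.rfl⟩
  apply Filter.mem_of_superset h
  have h2 : Ioc z y ⊆ s ∪ t := fun w hw => hab (xyab ⟨le_trans hz.1 (le_of_lt hw.1), hw.2⟩)
  exact fun w ⟨wt, wzy⟩ => (h2 wzy).elim id fun h => (wt h).elim

lemma auxIccPreconn [CompactSpace α] [DenselyOrdered α] {a b : α} : IsPreconnected (Icc a b) :=
  isPreconnected_closed_iff.2
    (by
      rintro s t hs ht hab ⟨x, hx⟩ ⟨y, hy⟩
      rcases le_total x y with h | h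
      · exact auxA4 x y s t h hs ht hab hx hy
      · rw [inter_comm s t]
        rw [union_comm s t] at hab
        exact auxA4 y x t s h ht hs hab hy hx)

lemma auxOrdConn [CompactSpace α] [DenselyOrdered α] {s : Set α} (h : s.OrdConnected) :
    IsPreconnected s :=
  isPreconnected_of_forall_pair fun x hx y hy =>
    ⟨uIcc x y, h.uIcc_subset hx hy, left_mem_uIcc, right_mem_uIcc, auxIccPreconn⟩

lemma auxDense [PreconnectedSpace α] : DenselyOrdered α := by
  constructor
  intro a b hab
  by_contra h
  push_neg at h
  have hcov : (univ : Set α) ⊆ Iio b ∪ Ioi a := fun z _ =>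
    (lt_or_ge z b).imp id fun hz => lt_of_lt_of_le hab hz
  obtain ⟨z, -, hz1, hz2⟩ := PreconnectedSpace.isPreconnected_univ (Iio b) (Ioi a)
    isOpen_Iio isOpen_Ioi hcov ⟨a, trivial, hab⟩ ⟨b, trivial, hab⟩
  exact absurd hz1 (not_lt.2 (h z hz2))

lemma auxConvexNbhd {O : Set α} (hO : IsOpen O) {x : α} (hx : x ∈ O) :
    ∃ J, IsOpen J ∧ x ∈ J ∧ J.OrdConnected ∧ J ⊆ O := by
  by_cases hl : ∃ l, l < x
  · obtain ⟨l, hlx, hlsub⟩ := exists_Ioc_subset_of_mem_nhds (hO.mem_nhds hx) hl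
    by_cases hu : ∃ u, x < u
    · obtain ⟨v, hxv, hvsub⟩ := exists_Ico_subset_of_mem_nhds (hO.mem_nhds hx) hu
      refine ⟨Ioo l v, isOpen_Ioo, ⟨hlx, hxv⟩, ordConnected_Ioo, fun z hz => ?_⟩
      rcases le_total z x with h | h
      · exact hlsub ⟨hz.1, h⟩
      · exact hvsub ⟨h, hz.2⟩
    · push_neg at hu
      refine ⟨Ioi l, isOpen_Ioi, hlx, ordConnected_Ioi, fun z hz => ?_⟩
      rcases le_total z x with h | h
      · exact hlsub ⟨hz, h⟩
      · rwa [le_antisymm (hu z) h]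
  · push_neg at hl
    by_cases hu : ∃ u, x < u
    · obtain ⟨v, hxv, hvsub⟩ := exists_Ico_subset_of_mem_nhds (hO.mem_nhds hx) hu
      refine ⟨Iio v, isOpen_Iio, hxv, ordConnected_Iio, fun z hz => ?_⟩
      rcases le_total z x with h | h
      · rwa [le_antisymm h (hl z)]
      · exact hvsub ⟨h, hz⟩
    · push_neg at hu
      refine ⟨univ, isOpen_univ, trivial, ordConnected_univ, fun z _ => ?_⟩
      rwa [le_antisymm (hu z) (hl z)]

lemma auxLCS [CompactSpace α] [DenselyOrdered α] : LocallyConnectedSpace α := by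
  rw [locallyConnectedSpace_iff_connected_subsets]
  intro x N hN
  obtain ⟨J, hJo, hxJ, hJc, hJsub⟩ :=
    auxConvexNbhd isOpen_interior (mem_interior_iff_mem_nhds.2 hN)
  exact ⟨J, hJo.mem_nhds hxJ, auxOrdConn hJc, hJsub.trans interior_subset⟩

end OrderAux


lemma auxT2 {X : Type u} [TopologicalSpace X] (n : ℕ) (L : Fin n → Set X)
    (hclosed : ∀ i, IsClosed (L i)) (ht2 : ∀ i, T2Space ↥(L i))
    (hcover : ⋃ i, L i = Set.univ) : T2Space X := by
  constructor
  intro p q hpq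
  have key : ∀ i, ∃ A B : Set X, IsOpen A ∧ IsOpen B ∧
      (p ∈ L i → p ∈ A) ∧ (q ∈ L i → q ∈ B) ∧ (A ∩ B ∩ L i = ∅) := by
    intro i
    by_cases hp : p ∈ L i
    · by_cases hq : q ∈ L i
      · haveI := ht2 i
        obtain ⟨A', B', hA', hB', hpA, hqB, hAB⟩ :=
          t2_separation (show (⟨p, hp⟩ : ↥(L i)) ≠ ⟨q, hq⟩ by
            simpa [Subtype.ext_iff] using hpq)
        obtain ⟨A, hA, hAeq⟩ := isOpen_induced_iff.1 hA'
        obtain ⟨B, hB, hBeq⟩ := isOpen_induced_iff.1 hB'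
        refine ⟨A, B, hA, hB, fun _ => ?_, fun _ => ?_, ?_⟩
        · have : (⟨p, hp⟩ : ↥(L i)) ∈ A' := hpA
          rw [← hAeq] at this; exact this
        · have : (⟨q, hq⟩ : ↥(L i)) ∈ B' := hqB
          rw [← hBeq] at this; exact this
        · ext z
          simp only [mem_inter_iff, mem_empty_iff_false, iff_false, not_and]
          intro hz hzL
          have h1 : (⟨z, hzL⟩ : ↥(L i)) ∈ A' := by rw [← hAeq]; exact hz.1
          have h2 : (⟨z, hzL⟩ : ↥(L i)) ∈ B' := by rw [← hBeq]; exact hz.2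
          exact hAB.ne_of_mem h1 h2 rfl
      · exact ⟨univ, ∅, isOpen_univ, isOpen_empty, fun _ => trivial,
          fun h => absurd h hq, by simp⟩
    · exact ⟨∅, univ, isOpen_empty, isOpen_univ, fun h => absurd h hp,
        fun _ => trivial, by simp⟩
  choose A B hA hB hpA hqB hABd using key
  refine ⟨⋂ i, (A i ∪ (L i)ᶜ), ⋂ i, (B i ∪ (L i)ᶜ), ?_, ?_, ?_, ?_, ?_⟩
  · exact isOpen_iInter_of_finite fun i => (hA i).union (hclosed i).isOpen_compl
  · exact isOpen_iInter_of_finite fun i => (hB i).union (hclosed i).isOpen_compl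
  · exact mem_iInter.2 fun i => by
      by_cases h : p ∈ L i
      · exact Or.inl (hpA i h)
      · exact Or.inr h
  · exact mem_iInter.2 fun i => by
      by_cases h : q ∈ L i
      · exact Or.inl (hqB i h)
      · exact Or.inr h
  · rw [Set.disjoint_left]
    intro z hz1 hz2
    have hzu : z ∈ ⋃ i, L i := hcover ▸ trivial
    obtain ⟨i, hi⟩ := mem_iUnion.1 hzu
    have h1 := mem_iInter.1 hz1 i
    have h2 := mem_iInter.1 hz2 i
    rcases h1 with h1 | h1; swap; · exact h1 hi
    rcases h2 with h2 | h2; swap; · exact h2 hi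
    have : z ∈ A i ∩ B i ∩ L i := ⟨⟨h1, h2⟩, hi⟩
    rw [hABd i] at this
    exact this

lemma collar_below {L : Type*} [LinearOrder L] [TopologicalSpace L] [OrderTopology L]
    (UL Gl DL : Set L) (hUL : IsOpen UL) (xL : L)
    (hxU : xL ∉ UL) (hG : Gl ∈ 𝓝 xL)
    (hFfin : (closure UL \ UL).Finite)
    (hDL : ∀ S : Set L, IsOpen S → (S ∩ UL).Nonempty → (S ∩ UL ∩ DL).Nonempty) :
    ∃ K E : Set L, K ⊆ UL ∩ Gl ∩ Iio xL ∧ E.Finite ∧ E ⊆ DL ∧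
      closure K ⊆ K ∪ {xL} ∧
      (∀ z ∈ K \ E, ∃ M, IsOpen M ∧ z ∈ M ∧ M ∩ UL ⊆ K) ∧
      ∃ NL : Set L, IsOpen NL ∧ NL ∩ UL ⊆ K ∧ NL ∪ Ici xL ∈ 𝓝 xL := by
  by_cases hP : ∃ c, c < xL ∧ Ioo c xL ∩ UL = ∅
  · obtain ⟨c, hc, hce⟩ := hP
    refine ⟨∅, ∅, empty_subset _, finite_empty, empty_subset _, by simp, by simp,
      Ioo c xL, isOpen_Ioo, hce.le, ?_⟩
    have h : Ioo c xL ∪ Ici xL = Ioi c :=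
      Set.ext fun z => ⟨fun h => h.elim (fun h => h.1) fun h => lt_of_lt_of_le hc h,
        fun hz => (lt_or_ge z xL).elim (fun h => Or.inl ⟨hz, h⟩) Or.inr⟩
    rw [h]
    exact isOpen_Ioi.mem_nhds hc
  · by_cases hbelow : ∃ c, c < xL
    · have hR : ∀ c, c < xL → (Ioo c xL ∩ UL).Nonempty := by
        intro c hc
        by_contra h
        exact hP ⟨c, hc, not_nonempty_iff_eq_empty.1 h⟩
      obtain ⟨l, hl, hIoc⟩ := exists_Ioc_subset_of_mem_nhds hG hbelow
      set FL := (closure UL \ UL) ∩ Ioo l xL with hFLdef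
      have hFLfin : FL.Finite := hFfin.inter_of_left _
      obtain ⟨c, hcmem, hcmax⟩ : ∃ c ∈ insert l FL, ∀ b ∈ insert l FL, c ≤ b → c = b := by
        obtain ⟨c, hc⟩ := Set.Finite.exists_maximalFor id _ (hFLfin.insert l) (insert_nonempty _ _)
        exact ⟨c, hc.1, fun b hb hcb => le_antisymm hcb (hc.2 hb hcb)⟩
      have hcub : ∀ b ∈ insert l FL, b ≤ c := by
        intro b hb
        by_contra hbc
        exact absurd (hcmax b hb (not_le.1 hbc).le) (ne_of_lt (not_le.1 hbc))
      have hcx : c < xL := by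
        rcases hcmem with rfl | hF
        · exact hl
        · exact hF.2.2
      have hlc : l ≤ c := hcub l (mem_insert _ _)
      obtain ⟨d, ⟨hdIoo, hdU⟩, hdD⟩ := hDL (Ioo c xL) isOpen_Ioo (hR c hcx)
      have hsub : UL ∩ Ico d xL ⊆ UL ∩ Gl ∩ Iio xL := by
        rintro z ⟨hzU, hzd, hzx⟩
        exact ⟨⟨hzU, hIoc ⟨lt_of_le_of_lt hlc (lt_of_lt_of_le hdIoo.1 hzd), hzx.le⟩⟩, hzx⟩
      refine ⟨UL ∩ Ico d xL, {d}, hsub, finite_singleton d,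
        singleton_subset_iff.2 hdD, ?_, ?_, Ioo d xL, isOpen_Ioo, ?_, ?_⟩
      · intro z hz
        have hIcc : z ∈ Icc d xL :=
          closure_minimal (inter_subset_right.trans Ico_subset_Icc_self) isClosed_Icc hz
        have hclU : z ∈ closure UL := closure_mono inter_subset_left hz
        rcases eq_or_lt_of_le hIcc.2 with rfl | hzx
        · exact Or.inr rfl
        · left
          refine ⟨?_, hIcc.1, hzx⟩
          by_contra hzU
          have hzF : z ∈ FL :=
            ⟨⟨hclU, hzU⟩, lt_of_le_of_lt hlc (lt_of_lt_of_le hdIoo.1 hIcc.1), hzx⟩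
          exact absurd (hcub z (mem_insert_of_mem _ hzF))
            (not_le.2 (lt_of_lt_of_le hdIoo.1 hIcc.1))
      · rintro z ⟨⟨hzU, hzd, hzx⟩, hzne⟩
        have hdz : d < z := lt_of_le_of_ne hzd (Ne.symm (by simpa using hzne))
        exact ⟨UL ∩ Ioo d xL, hUL.inter isOpen_Ioo, ⟨hzU, hdz, hzx⟩,
          fun w hw => ⟨hw.2, hw.1.2.1.le, hw.1.2.2⟩⟩
      · rintro w ⟨hw1, hw2⟩
        exact ⟨hw2, hw1.1.le, hw1.2⟩
      · have h : Ioo d xL ∪ Ici xL = Ioi d :=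
          Set.ext fun z => ⟨fun h => h.elim (fun h => h.1) fun h => lt_of_lt_of_le hdIoo.2 h,
            fun hz => (lt_or_ge z xL).elim (fun h => Or.inl ⟨hz, h⟩) Or.inr⟩
        rw [h]
        exact isOpen_Ioi.mem_nhds hdIoo.2
    · refine ⟨∅, ∅, empty_subset _, finite_empty, empty_subset _, by simp, by simp,
        ∅, isOpen_empty, by simp, ?_⟩
      have h : (∅ : Set L) ∪ Ici xL = univ :=
        eq_univ_of_forall fun z => Or.inr (le_of_not_gt fun h => hbelow ⟨z, h⟩)
      rw [h]
      exact Filter.univ_mem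

lemma collar_at {X : Type u} [TopologicalSpace X] [T2Space X] [CompactSpace X]
    {U D : Set X} (hUopen : IsOpen U) (hD : Dense D)
    (hFfin : (closure U \ U).Finite)
    {x : X} (hxF : x ∈ closure U \ U) (hLO : x ∈ LO X) {p : X} (hp : p ∈ U) :
    ∃ KT E NT : Set X, KT ⊆ U ∧ p ∉ KT ∧ E.Finite ∧ E ⊆ D ∧ E ⊆ LO X ∧
      closure KT ⊆ KT ∪ {x} ∧
      (∀ z ∈ KT \ E, ∃ M, IsOpen M ∧ z ∈ M ∧ M ∩ U ⊆ KT) ∧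
      IsOpen NT ∧ x ∈ NT ∧ NT ∩ U ⊆ KT := by
  obtain ⟨W, hWopen, hxW, Lt, lo, ts, hot, ⟨e⟩⟩ := hLO
  letI := lo; letI := ts; haveI := hot
  set ψ : Lt → X := (Subtype.val : ↥W → X) ∘ e.symm with hψdef
  have hψ : IsOpenEmbedding ψ :=
    hWopen.isOpenEmbedding_subtypeVal.comp e.symm.isOpenEmbedding
  have hrange : range ψ = W := by
    rw [hψdef, Set.range_comp, e.symm.surjective.range_eq, image_univ, Subtype.range_coe]
  set xL : Lt := e ⟨x, hxW⟩ with hxLdef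
  have hψx : ψ xL = x := by simp [hψdef, hxLdef]
  have hxp : x ≠ p := fun h => hxF.2 (h ▸ hp)
  obtain ⟨t, htn, htc, hts⟩ := exists_mem_nhds_isClosed_subset
    ((hWopen.inter isClosed_singleton.isOpen_compl).mem_nhds ⟨hxW, hxp⟩)
  set G : Set X := interior t with hGdef
  have hGx : x ∈ G := mem_interior_iff_mem_nhds.2 htn
  have hGW : G ⊆ W := fun z hz => (hts (interior_subset hz)).1
  have hGp : p ∉ G := fun hz => (hts (interior_subset hz)).2 rfl
  set UL : Set Lt := ψ ⁻¹' U with hULdef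
  set Gl : Set Lt := ψ ⁻¹' G with hGldef
  set DL : Set Lt := ψ ⁻¹' D with hDLdef
  have hULopen : IsOpen UL := hUopen.preimage hψ.continuous
  have hclUL : closure UL = ψ ⁻¹' closure U :=
    (hψ.isOpenMap.preimage_closure_eq_closure_preimage hψ.continuous U).symm
  have hFL : (closure UL \ UL).Finite := by
    have : closure UL \ UL = ψ ⁻¹' (closure U \ U) := by
      rw [preimage_diff, hclUL]
    rw [this]
    exact hFfin.preimage hψ.injective.injOn
  have hGnhds : Gl ∈ 𝓝 xL :=
    (isOpen_interior.preimage hψ.continuous).mem_nhds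
      (mem_preimage.2 (by rw [hψx]; exact hGx))
  have hxUL : xL ∉ UL := by
    intro h
    rw [hULdef, mem_preimage, hψx] at h
    exact hxF.2 h
  have hDLprop : ∀ S : Set Lt, IsOpen S → (S ∩ UL).Nonempty → (S ∩ UL ∩ DL).Nonempty := by
    intro S hS ⟨w, hw⟩
    obtain ⟨z, hzD, hzmem⟩ := hD.exists_mem_open (hψ.isOpenMap _ (hS.inter hULopen))
      ⟨ψ w, mem_image_of_mem _ hw⟩
    obtain ⟨v, hv, rfl⟩ := hzmem
    exact ⟨v, hv, hzD⟩
  obtain ⟨Kb, Eb, hKbsub, hEbfin, hEbD, hKbcl, hKbM, Nb, hNbo, hNbU, hNbn⟩ :=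
    collar_below UL Gl DL hULopen xL hxUL hGnhds hFL hDLprop
  obtain ⟨Ka, Ea, hKasub, hEafin, hEaD, hKacl, hKaM, Na, hNao, hNaU, hNan⟩ :=
    collar_below (L := Ltᵒᵈ) UL Gl DL hULopen xL hxUL hGnhds hFL hDLprop
  set KT : Set X := ψ '' (Kb ∪ Ka) with hKTdef
  set E : Set X := ψ '' (Eb ∪ Ea) with hEdef
  set NTL : Set Lt := interior ((Nb ∪ Ici xL) ∩ (Na ∪ Ici (α := Ltᵒᵈ) xL)) with hNTLdef
  set NT : Set X := ψ '' NTL with hNTdef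
  have hKbG : Kb ⊆ Gl := fun z hz => (hKbsub hz).1.2
  have hKaG : Ka ⊆ Gl := fun z hz => (hKasub hz).1.2
  have hKTG : KT ⊆ G := by
    rintro z ⟨w, hw, rfl⟩
    rcases hw with hw | hw
    · exact hKbG hw
    · exact hKaG hw
  refine ⟨KT, E, NT, ?_, ?_, ?_, ?_, ?_, ?_, ?_, ?_, ?_, ?_⟩
  · rintro z ⟨w, hw, rfl⟩
    rcases hw with hw | hw
    · exact (hKbsub hw).1.1
    · exact (hKasub hw).1.1
  · exact fun h => hGp (hKTG h)
  · exact (hEbfin.union hEafin).image ψ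
  · rintro z ⟨w, hw, rfl⟩
    rcases hw with hw | hw
    · exact hEbD hw
    · exact hEaD hw
  · rintro z ⟨w, hw, rfl⟩
    exact ⟨W, hWopen, by
      have : ψ w ∈ range ψ := mem_range_self w
      rwa [hrange] at this, Lt, lo, ts, hot, ⟨e⟩⟩
  · -- closure KT ⊆ KT ∪ {x}
    intro z hz
    have hzt : z ∈ t := closure_minimal (hKTG.trans interior_subset) htc hz
    have hzW : z ∈ range ψ := by rw [hrange]; exact (hts hzt).1
    obtain ⟨w, rfl⟩ := hzW
    have hw : w ∈ closure (Kb ∪ Ka) := by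
      have h1 : w ∈ ψ ⁻¹' closure KT := hz
      rw [hψ.isOpenMap.preimage_closure_eq_closure_preimage hψ.continuous, hKTdef,
        preimage_image_eq _ hψ.injective] at h1
      exact h1
    replace hw := (closure_union (s := Kb) (t := show Set Lt from Ka)).subset hw
    rcases hw with hw | hw
    · rcases hKbcl hw with hw | hw
      · exact Or.inl ⟨w, Or.inl hw, rfl⟩
      · rw [mem_singleton_iff] at hw
        exact Or.inr (by rw [hw, hψx]; rfl)
    · rcases hKacl hw with hw | hw
      · exact Or.inl ⟨w, Or.inr hw, rfl⟩
      · replace hw : w = xL := hw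
        exact Or.inr (by rw [hw, hψx]; rfl)
  · -- M property
    rintro z ⟨⟨w, hw, rfl⟩, hzE⟩
    rcases hw with hw | hw
    · have hwEb : w ∉ Eb := fun h => hzE ⟨w, Or.inl h, rfl⟩
      obtain ⟨ML, hMLo, hwM, hMU⟩ := hKbM w ⟨hw, hwEb⟩
      refine ⟨ψ '' ML, hψ.isOpenMap _ hMLo, mem_image_of_mem _ hwM, ?_⟩
      rintro y ⟨⟨v, hv, rfl⟩, hyU⟩
      exact ⟨v, Or.inl (hMU ⟨hv, hyU⟩), rfl⟩
    · have hwEa : w ∉ Ea := fun h => hzE ⟨w, Or.inr h, rfl⟩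
      obtain ⟨ML, hMLo, hwM, hMU⟩ := hKaM w ⟨hw, hwEa⟩
      refine ⟨ψ '' ML, hψ.isOpenMap _ hMLo, mem_image_of_mem _ hwM, ?_⟩
      rintro y ⟨⟨v, hv, rfl⟩, hyU⟩
      exact ⟨v, Or.inr (hMU ⟨hv, hyU⟩), rfl⟩
  · exact hψ.isOpenMap _ isOpen_interior
  · refine ⟨xL, ?_, hψx⟩
    exact mem_interior_iff_mem_nhds.2 (Filter.inter_mem hNbn hNan)
  · -- NT ∩ U ⊆ KT
    rintro z ⟨⟨w, hw, rfl⟩, hzU⟩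
    have hwU : w ∈ UL := hzU
    have hw' := interior_subset hw
    have hwne : w ≠ xL := fun h => hxUL (h ▸ hwU)
    rcases lt_trichotomy w xL with hlt | heq | hgt
    · have : w ∈ Nb := by
        rcases hw'.1 with h | h
        · exact h
        · exact absurd h (not_le.2 hlt)
      exact ⟨w, Or.inl (hNbU ⟨this, hwU⟩), rfl⟩
    · exact absurd heq hwne
    · have : w ∈ Na := by
        rcases hw'.2 with h | h
        · exact h
        · exact absurd hgt (not_lt.2 h)
      exact ⟨w, Or.inr (hNaU ⟨this, hwU⟩), rfl⟩

lemma auxComp {X : Type u} [TopologicalSpace X] (n : ℕ) (L : Fin n → Set X)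
    (hclosed : ∀ i, IsClosed (L i))
    (hlcs : ∀ i, LocallyConnectedSpace ↥(L i))
    (hcover : ⋃ i, L i = Set.univ) {O : Set X} (hO : IsOpen O) :
    ∀ w ∈ O, ∃ N, IsOpen N ∧ w ∈ N ∧ N ⊆ connectedComponentIn O w := by
  intro w hw
  have key : ∀ i : Fin n, ∃ Ni : Set X, IsOpen Ni ∧ w ∈ Ni ∧
      ∀ z ∈ Ni ∩ L i, z ∈ connectedComponentIn O w := by
    intro i
    by_cases hwi : w ∈ L i
    · haveI := hlcs i
      set Si : Set ↥(L i) := Subtype.val ⁻¹' O with hSidef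
      have hSio : IsOpen Si := hO.preimage continuous_subtype_val
      set ci := connectedComponentIn Si ⟨w, hwi⟩ with hcidef
      have hcio : IsOpen ci := hSio.connectedComponentIn
      obtain ⟨Oi, hOi, hOieq⟩ := isOpen_induced_iff.1 hcio
      have hwci : (⟨w, hwi⟩ : ↥(L i)) ∈ ci := mem_connectedComponentIn hw
      refine ⟨Oi, hOi, ?_, ?_⟩
      · rw [← hOieq] at hwci; exact hwci
      · rintro z ⟨hzO, hzL⟩
        have hzci : (⟨z, hzL⟩ : ↥(L i)) ∈ ci := by rw [← hOieq]; exact hzO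
        have hpre : IsPreconnected (Subtype.val '' ci) :=
          (isPreconnected_connectedComponentIn).image _
            continuous_subtype_val.continuousOn
        have hsubO : Subtype.val '' ci ⊆ O := by
          rintro y ⟨v, hv, rfl⟩
          exact connectedComponentIn_subset Si _ hv
        exact hpre.subset_connectedComponentIn (mem_image_of_mem _ hwci) hsubO
          (mem_image_of_mem _ hzci)
    · exact ⟨(L i)ᶜ, (hclosed i).isOpen_compl, hwi, fun z hz => absurd hz.2 hz.1⟩
  choose Ni hNo hNw hNc using key
  refine ⟨O ∩ ⋂ i, Ni i, hO.inter (isOpen_iInter_of_finite hNo), ⟨hw, mem_iInter.2 hNw⟩, ?_⟩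
  intro z hz
  have hzu : z ∈ ⋃ i, L i := hcover ▸ trivial
  obtain ⟨i, hi⟩ := mem_iUnion.1 hzu
  exact hNc i z ⟨mem_iInter.1 hz.2 i, hi⟩

theorem stmt_3 {X : Type u} [TopologicalSpace X] (n : ℕ) (L : Fin n → Set X)
    (hclosed : ∀ i, IsClosed (L i)) (hcomp : ∀ i, IsCompact (L i))
    (hconn : ∀ i, IsConnected (L i)) (hlots : ∀ i, IsLOTS ↥(L i))
    (hcover : ⋃ i, L i = Set.univ)
    (p : X) (U : Set X) (hU : Orderly U) (hpU : p ∈ U)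
    (D : Set X) (hD : Dense D) :
    ∃ V : Set X, Orderly V ∧ p ∈ V ∧ closure V ⊆ U ∧ closure V \ V ⊆ D := by
  classical
  obtain ⟨hUopen, hUcan, hUconn, hFfin, hFLO⟩ := hU
  haveI hXc : CompactSpace X := ⟨by rw [← hcover]; exact isCompact_iUnion hcomp⟩
  have ht2i : ∀ i, T2Space ↥(L i) := by
    intro i
    obtain ⟨M, lo, ts, hot, ⟨e⟩⟩ := hlots i
    letI := lo; letI := ts; haveI := hot
    haveI : T2Space M := inferInstance
    exact e.isEmbedding.t2Space
  haveI hXt2 : T2Space X := auxT2 n L hclosed ht2i hcover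
  have hlcs : ∀ i, LocallyConnectedSpace ↥(L i) := by
    intro i
    obtain ⟨M, lo, ts, hot, ⟨e⟩⟩ := hlots i
    letI := lo; letI := ts; haveI := hot
    haveI : CompactSpace ↥(L i) := isCompact_iff_compactSpace.1 (hcomp i)
    haveI : CompactSpace M := e.compactSpace
    haveI : ConnectedSpace ↥(L i) := Subtype.connectedSpace (hconn i)
    haveI : ConnectedSpace M := e.surjective.connectedSpace e.continuous
    haveI : DenselyOrdered M := auxDense
    haveI : LocallyConnectedSpace M := auxLCS
    exact e.locallyConnectedSpace
  set F := closure U \ U with hFdef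
  have hcol := fun (x : X) (hx : x ∈ F) =>
    collar_at hUopen hD hFfin hx (hFLO hx) hpU
  choose! KT E NT hKTU hKTp hEfin hED hELO hKTcl hKTM hNTo hNTx hNTU using hcol
  set K := ⋃ x ∈ F, KT x with hKdef
  set EE := ⋃ x ∈ F, E x with hEEdef
  have hEEfin : EE.Finite := hFfin.biUnion fun x hx => hEfin x hx
  have hKcl : closure K ⊆ K ∪ F := by
    rw [hKdef, hFfin.closure_biUnion]
    refine iUnion₂_subset fun x hx => (hKTcl x hx).trans ?_
    rintro z (hz | hz)
    · exact Or.inl (mem_biUnion hx hz)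
    · right; rw [mem_singleton_iff.1 hz]; exact hx
  set O := U \ K with hOdef
  have hOU : O ⊆ U := diff_subset
  have hOeq : O = U ∩ (closure K)ᶜ := by
    apply Subset.antisymm
    · rintro z ⟨hzU, hzK⟩
      refine ⟨hzU, fun hzc => ?_⟩
      rcases hKcl hzc with h | h
      · exact hzK h
      · exact h.2 hzU
    · rintro z ⟨hzU, hzc⟩
      exact ⟨hzU, fun h => hzc (subset_closure h)⟩
  have hOopen : IsOpen O := by
    rw [hOeq]; exact hUopen.inter isClosed_closure.isOpen_compl
  have hpO : p ∈ O := by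
    refine ⟨hpU, fun h => ?_⟩
    obtain ⟨x, hx, hpK⟩ := mem_iUnion₂.1 h
    exact hKTp x hx hpK
  set C := connectedComponentIn O p with hCdef
  have hpC : p ∈ C := mem_connectedComponentIn hpO
  have hCO : C ⊆ O := connectedComponentIn_subset _ _
  have hcompopen := auxComp n L hclosed hlcs hcover hOopen
  have hCopen : IsOpen C := by
    rw [isOpen_iff_forall_mem_open]
    intro w hwC
    obtain ⟨N, hNo, hwN, hNsub⟩ := hcompopen w (hCO hwC)
    exact ⟨N, hNsub.trans (connectedComponentIn_eq hwC).symm.subset, hNo, hwN⟩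
  have hCcl : closure C ∩ O ⊆ C := by
    rintro q ⟨hqcl, hqO⟩
    obtain ⟨N, hNo, hqN, hNsub⟩ := hcompopen q hqO
    obtain ⟨y, hyN, hyC⟩ := mem_closure_iff.1 hqcl N hNo hqN
    have h1 : connectedComponentIn O q = connectedComponentIn O y :=
      connectedComponentIn_eq (hNsub hyN)
    have h2 : connectedComponentIn O p = connectedComponentIn O y :=
      connectedComponentIn_eq hyC
    have hq : q ∈ connectedComponentIn O q := mem_connectedComponentIn hqO
    rw [h1, ← h2] at hq
    exact hq
  have hFnotcl : ∀ x ∈ F, x ∉ closure O := by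
    intro x hx hxcl
    obtain ⟨y, hyN, hyO⟩ := mem_closure_iff.1 hxcl (NT x) (hNTo x hx) (hNTx x hx)
    exact hyO.2 (mem_biUnion hx (hNTU x hx ⟨hyN, hyO.1⟩))
  have hclOU : closure O ⊆ U := by
    intro z hz
    by_cases h : z ∈ U
    · exact h
    · exact absurd hz (hFnotcl z ⟨closure_mono hOU hz, h⟩)
  have hclCU : closure C ⊆ U := (closure_mono hCO).trans hclOU
  have hfr : closure C \ C ⊆ EE := by
    rintro z ⟨hzcl, hzC⟩
    have hzU : z ∈ U := hclCU hzcl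
    have hzO : z ∉ O := fun h => hzC (hCcl ⟨hzcl, h⟩)
    have hzK : z ∈ K := by
      by_contra h; exact hzO ⟨hzU, h⟩
    obtain ⟨x, hx, hzKT⟩ := mem_iUnion₂.1 hzK
    by_contra hzE
    have hzEx : z ∉ E x := fun h => hzE (mem_biUnion hx h)
    obtain ⟨M, hMo, hzM, hMU⟩ := hKTM x hx z ⟨hzKT, hzEx⟩
    obtain ⟨y, hyM, hyC⟩ := mem_closure_iff.1 hzcl M hMo hzM
    have hyO : y ∈ O := hCO hyC
    exact hyO.2 (mem_biUnion hx (hMU ⟨hyM, hyO.1⟩))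
  have hCV : C ⊆ interior (closure C) := interior_maximal subset_closure hCopen
  have hclV : closure (interior (closure C)) = closure C :=
    Subset.antisymm
      ((closure_mono interior_subset).trans closure_closure.subset)
      (closure_mono hCV)
  have hVfr : closure (interior (closure C)) \ interior (closure C) ⊆ EE := by
    rintro z ⟨hzcl, hzV⟩
    rw [hclV] at hzcl
    exact hfr ⟨hzcl, fun h => hzV (hCV h)⟩
  have hCpre : IsPreconnected C :=
    (isConnected_connectedComponentIn_iff.2 hpO).isPreconnected
  refine ⟨interior (closure C), ⟨isOpen_interior, by rw [hclV], ?_, ?_, ?_⟩,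
    hCV hpC, ?_, ?_⟩
  · exact ⟨⟨p, hCV hpC⟩, hCpre.subset_closure hCV interior_subset⟩
  · exact hEEfin.subset hVfr
  · exact hVfr.trans (iUnion₂_subset fun x hx => hELO x hx)
  · rw [hclV]; exact hclCU
  · exact hVfr.trans (iUnion₂_subset fun x hx => hED x hx)
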